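/- Let 𝔫 be a finite-dimensional real Lie algebra of compact type of dimension n ≥ 3, regarded as the inner product space V = 𝔫 with ⟨·,·⟩ = −B and with Lie bracket ρ(a,b) = [a,b]. If (γ₀,γ₁) is a connection form which is normal with respect to ρ and such that γ₀(a) is skew-adjoint for every a ∈ 𝔫, then necessarily γ₀(a) = (1/2)·ad(a) and γ₁(a) = −(1/(8(n−1)))·⟨a,·⟩ for all a ∈ 𝔫. (Uniqueness of the normal conformal Cartan connection form of the bi-invariant metric in the metric gauge.) -/

import Mathlib

open Finset

noncomputable section

variable {V : Type*} [AddCommGroup V] [Module ℝ V]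

/-- `β(a,l) x := l(x) • a - ⟨a,x⟩ • l♯ + l(a) • x`, where `ip` is the inner product of `V`,
`l` a linear functional and `lSharp` its metric dual (the unique vector with
`ip lSharp x = l x` for all `x`); this realises the bracket `[a,l]` of `𝔪₋₁` with `𝔪₁`
inside `𝔰𝔬(1,n+1)`, acting on `𝔪₋₁ ≅ V`. -/
def mBracket (ip : V → V → ℝ) (a : V) (l : V → ℝ) (lSharp : V) (x : V) : V :=
  l x • a - ip a x • lSharp + l a • x

/-- The 0-curvature `κ₀(a,b) := -γ₀(ρ(a,b)) + γ₀(a)∘γ₀(b) - γ₀(b)∘γ₀(a)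
+ β(a,γ₁(b)) - β(b,γ₁(a))` of a connection form `(γ₀, γ₁)` with respect to a Lie
bracket `ρ` on `V`; here `sh a` denotes the metric dual of the functional `γ₁ a`. -/
def kappaZero (ip : V → V → ℝ) (ρ : V → V → V) (γ₀ : V → Module.End ℝ V)
    (γ₁ : V → V → ℝ) (sh : V → V) (a b x : V) : V :=
  -(γ₀ (ρ a b) x) + γ₀ a (γ₀ b x) - γ₀ b (γ₀ a x)
    + mBracket ip a (γ₁ b) (sh b) x - mBracket ip b (γ₁ a) (sh a) x

end

/-- Let `𝔫` be a finite-dimensional real Lie algebra of compact type of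
dimension `n ≥ 3`, regarded as the inner product space `V = 𝔫` with `⟨x,y⟩ = -B x y`
(Killing form `B`) and with Lie bracket `ρ(a,b) = ⁅a,b⁆`.  If `(γ₀, γ₁)` is a connection
form (a pair of linear maps `γ₀ : V → 𝔠𝔬(V)`, `γ₁ : V → V*`; `sh a` denotes the metric
dual of `γ₁ a`) which is normal with respect to `ρ` (torsion-free and with 0-curvature
satisfying the trace condition) and such that `γ₀ a` is skew-adjoint for every `a`, then
necessarily `γ₀ a = (1/2) • ad a` and `γ₁ a = -(1/(8(n-1))) • ⟨a,·⟩` for all `a ∈ 𝔫`. -/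
theorem normal_cartan_connection_form_unique
    (𝔫 : Type*) [LieRing 𝔫] [LieAlgebra ℝ 𝔫] [Module.Finite ℝ 𝔫]
    (hB : ∀ x : 𝔫, x ≠ 0 → killingForm ℝ 𝔫 x x < 0)
    (n : ℕ) (hn : 3 ≤ n) (e : Module.Basis (Fin n) ℝ 𝔫)
    (he : ∀ i j, -killingForm ℝ 𝔫 (e i) (e j) = if i = j then 1 else 0)
    (γ₀ : 𝔫 →ₗ[ℝ] Module.End ℝ 𝔫) (γ₁ : 𝔫 →ₗ[ℝ] (𝔫 →ₗ[ℝ] ℝ)) (sh : 𝔫 → 𝔫)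
    (hsh : ∀ a x : 𝔫, -killingForm ℝ 𝔫 (sh a) x = γ₁ a x)
    (hskew : ∀ a x y : 𝔫,
      -killingForm ℝ 𝔫 (γ₀ a x) y + -killingForm ℝ 𝔫 x (γ₀ a y) = 0)
    (htf : ∀ a b : 𝔫, ⁅a, b⁆ = γ₀ a b - γ₀ b a)
    (htrace : ∀ a b : 𝔫,
      ∑ i, -killingForm ℝ 𝔫
          (kappaZero (fun x y : 𝔫 => -killingForm ℝ 𝔫 x y)
            (fun x y : 𝔫 => ⁅x, y⁆)
            (fun x : 𝔫 => γ₀ x)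
            (fun x y : 𝔫 => γ₁ x y)
            sh (e i) a b)
          (e i) = 0) :
    (∀ a : 𝔫, γ₀ a = (1 / 2 : ℝ) • LieAlgebra.ad ℝ 𝔫 a) ∧
    (∀ a x : 𝔫, γ₁ a x = -(1 / (8 * ((n : ℝ) - 1))) * (-killingForm ℝ 𝔫 a x)) := by
  have ksymm : ∀ x y : 𝔫, killingForm ℝ 𝔫 x y = killingForm ℝ 𝔫 y x :=
    fun x y => LieModule.traceForm_comm ℝ 𝔫 𝔫 x y
  have kinv : ∀ x y z : 𝔫, killingForm ℝ 𝔫 ⁅x,y⁆ z = killingForm ℝ 𝔫 x ⁅y,z⁆ :=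
    fun x y z => LieModule.traceForm_apply_lie_apply ℝ 𝔫 𝔫 x y z
  have kskew : ∀ a u v : 𝔫, killingForm ℝ 𝔫 ⁅a,u⁆ v = - killingForm ℝ 𝔫 u ⁅a,v⁆ :=
    fun a u v => LieModule.traceForm_apply_lie_apply' ℝ 𝔫 𝔫 a u v
  have hzero : ∀ v : 𝔫, (∀ c, killingForm ℝ 𝔫 v c = 0) → v = 0 := by
    intro v hv
    by_contra h
    exact (hB v h).ne (hv v)
  have hrepr : ∀ (v : 𝔫) (j : Fin n), e.repr v j = -killingForm ℝ 𝔫 v (e j) := by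
    intro v j
    have h1 : killingForm ℝ 𝔫 v (e j)
        = ∑ i, e.repr v i * killingForm ℝ 𝔫 (e i) (e j) := by
      conv_lhs => rw [← e.sum_repr v]
      simp only [map_sum, LinearMap.sum_apply, map_smul, LinearMap.smul_apply, smul_eq_mul]
    rw [h1]
    have h2 : ∀ i, e.repr v i * killingForm ℝ 𝔫 (e i) (e j)
        = -(e.repr v i * (if i = j then (1:ℝ) else 0)) := by
      intro i; rw [← he i j]; ring
    rw [Finset.sum_congr rfl fun i _ => h2 i]
    simp
  have hexp : ∀ v : 𝔫, ∑ i, (-killingForm ℝ 𝔫 v (e i)) • (e i) = v := by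
    intro v
    simp_rw [← hrepr]
    exact e.sum_repr v
  have parseval : ∀ u v : 𝔫,
      ∑ i, (-killingForm ℝ 𝔫 u (e i)) * (-killingForm ℝ 𝔫 v (e i))
        = -killingForm ℝ 𝔫 u v := by
    intro u v
    conv_rhs => rw [← hexp v]
    rw [map_sum, ← Finset.sum_neg_distrib]
    refine Finset.sum_congr rfl fun i _ => ?_
    rw [map_smul, smul_eq_mul]
    ring
  have htr : ∀ f : Module.End ℝ 𝔫,
      LinearMap.trace ℝ 𝔫 f = ∑ j, -killingForm ℝ 𝔫 (f (e j)) (e j) := by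
    intro f
    rw [LinearMap.trace_eq_matrix_trace ℝ e f]
    simp [Matrix.trace, Matrix.diag, LinearMap.toMatrix_apply, hrepr]
  have casimir : ∀ a b : 𝔫,
      ∑ i, -killingForm ℝ 𝔫 ⁅e i, a⁆ ⁅e i, b⁆ = -killingForm ℝ 𝔫 a b := by
    intro a b
    have L2 : ∀ (i j : Fin n) (c : 𝔫),
        -killingForm ℝ 𝔫 ⁅e i, c⁆ (e j) = -killingForm ℝ 𝔫 ⁅c, e j⁆ (e i) := by
      intro i j c
      rw [kinv, ksymm]
    calc ∑ i, -killingForm ℝ 𝔫 ⁅e i, a⁆ ⁅e i, b⁆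
        = ∑ i, ∑ j, (-killingForm ℝ 𝔫 ⁅e i, a⁆ (e j)) * (-killingForm ℝ 𝔫 ⁅e i, b⁆ (e j)) :=
          Finset.sum_congr rfl fun i _ => (parseval _ _).symm
      _ = ∑ j, ∑ i, (-killingForm ℝ 𝔫 ⁅a, e j⁆ (e i)) * (-killingForm ℝ 𝔫 ⁅b, e j⁆ (e i)) := by
          rw [Finset.sum_comm]
          exact Finset.sum_congr rfl fun j _ => Finset.sum_congr rfl fun i _ => by
            rw [L2 i j a, L2 i j b]
      _ = ∑ j, -killingForm ℝ 𝔫 ⁅a, e j⁆ ⁅b, e j⁆ :=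
          Finset.sum_congr rfl fun j _ => parseval _ _
      _ = ∑ j, killingForm ℝ 𝔫 ((LieAlgebra.ad ℝ 𝔫 a ∘ₗ LieAlgebra.ad ℝ 𝔫 b) (e j)) (e j) := by
          refine Finset.sum_congr rfl fun j _ => ?_
          rw [kskew a (e j) ⁅b, e j⁆]
          simp [LieAlgebra.ad_apply, ksymm]
      _ = -killingForm ℝ 𝔫 a b := by
          have h := htr (LieAlgebra.ad ℝ 𝔫 a ∘ₗ LieAlgebra.ad ℝ 𝔫 b)
          rw [← killingForm_apply_apply ℝ 𝔫 a b] at h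
          rw [h, ← Finset.sum_neg_distrib]
          simp
  -- Step 1: γ₀ a b = (1/2) ⁅a,b⁆
  set f : 𝔫 → 𝔫 → 𝔫 → ℝ := fun a b c =>
    killingForm ℝ 𝔫 (γ₀ a b) c - (1/2) * killingForm ℝ 𝔫 ⁅a,b⁆ c with hf
  have sym1 : ∀ a b c : 𝔫, f a b c = f b a c := by
    intro a b c
    have h1 : killingForm ℝ 𝔫 (γ₀ a b) c - killingForm ℝ 𝔫 (γ₀ b a) c
        = killingForm ℝ 𝔫 ⁅a,b⁆ c := by
      rw [htf a b, map_sub, LinearMap.sub_apply]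
    have h2 : killingForm ℝ 𝔫 ⁅b,a⁆ c = -killingForm ℝ 𝔫 ⁅a,b⁆ c := by
      rw [← lie_skew b a, map_neg, LinearMap.neg_apply]
    simp only [hf]
    linarith
  have sym2 : ∀ a b c : 𝔫, f a b c = -(f a c b) := by
    intro a b c
    have h1 := hskew a b c
    have h2 : killingForm ℝ 𝔫 b (γ₀ a c) = killingForm ℝ 𝔫 (γ₀ a c) b := ksymm _ _
    have h3 : killingForm ℝ 𝔫 ⁅a,b⁆ c = -killingForm ℝ 𝔫 ⁅a,c⁆ b := by
      rw [kskew a b c, ksymm]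
    simp only [hf]
    linarith
  have hf0 : ∀ a b c : 𝔫, f a b c = 0 := by
    intro a b c
    have : f a b c = -(f a b c) := by
      calc f a b c = f b a c := sym1 a b c
        _ = -(f b c a) := sym2 b a c
        _ = -(f c b a) := by rw [sym1 b c a]
        _ = f c a b := by rw [sym2 c b a]; ring_nf
        _ = f a c b := sym1 c a b
        _ = -(f a b c) := sym2 a c b
    linarith
  have hγ : ∀ a b : 𝔫, γ₀ a b = (1/2 : ℝ) • ⁅a,b⁆ := by
    intro a b
    have hv : ∀ c, killingForm ℝ 𝔫 (γ₀ a b - (1/2:ℝ) • ⁅a,b⁆) c = 0 := by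
      intro c
      have h := hf0 a b c
      simp only [hf] at h
      rw [map_sub, LinearMap.sub_apply, map_smul, LinearMap.smul_apply, smul_eq_mul]
      linarith
    exact sub_eq_zero.mp (hzero _ hv)
  have step1 : ∀ a : 𝔫, γ₀ a = (1 / 2 : ℝ) • LieAlgebra.ad ℝ 𝔫 a := by
    intro a
    ext b
    rw [hγ a b]
    simp [LieAlgebra.ad_apply]
  have hsummand : ∀ (a b : 𝔫) (i : Fin n),
      -killingForm ℝ 𝔫
          (kappaZero (fun x y : 𝔫 => -killingForm ℝ 𝔫 x y) (fun x y : 𝔫 => ⁅x, y⁆)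
            (fun x : 𝔫 => γ₀ x) (fun x y : 𝔫 => γ₁ x y) sh (e i) a b) (e i)
      = (1/4) * (-killingForm ℝ 𝔫 ⁅e i, a⁆ ⁅e i, b⁆)
        + (γ₁ a b * (-killingForm ℝ 𝔫 (e i) (e i))
           - (-killingForm ℝ 𝔫 (e i) b) * γ₁ a (e i)
           + γ₁ a (e i) * (-killingForm ℝ 𝔫 b (e i)))
        - (γ₁ (e i) b * (-killingForm ℝ 𝔫 a (e i))
           - (-killingForm ℝ 𝔫 a b) * γ₁ (e i) (e i)
           + γ₁ (e i) a * (-killingForm ℝ 𝔫 b (e i))) := by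
    intro a b i
    have hQ : killingForm ℝ 𝔫 ⁅e i, ⁅a, b⁆⁆ (e i)
        = killingForm ℝ 𝔫 ⁅⁅e i, a⁆, b⁆ (e i) + killingForm ℝ 𝔫 ⁅a, ⁅e i, b⁆⁆ (e i) := by
      rw [leibniz_lie (e i) a b, map_add, LinearMap.add_apply]
    have hP : killingForm ℝ 𝔫 ⁅⁅e i, a⁆, b⁆ (e i) = -killingForm ℝ 𝔫 ⁅e i, a⁆ ⁅e i, b⁆ := by
      rw [kinv ⁅e i, a⁆ b (e i), ← lie_skew (e i) b, map_neg, neg_neg]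
    have hA1 := hsh a (e i)
    have hA2 := hsh (e i) (e i)
    simp only [kappaZero, mBracket, hγ, map_smul, lie_smul, smul_smul, map_add, map_sub,
      map_neg, LinearMap.add_apply, LinearMap.sub_apply, LinearMap.neg_apply,
      LinearMap.smul_apply, smul_eq_mul]
    linear_combination (-(1/4 : ℝ)) * hQ + (1/4 : ℝ) * hP
      + (killingForm ℝ 𝔫 (e i) b) * hA1 - (killingForm ℝ 𝔫 a b) * hA2
  set T : ℝ := ∑ i, γ₁ (e i) (e i) with hT
  have s2 : ∑ i : Fin n, -killingForm ℝ 𝔫 (e i) (e i) = (n:ℝ) := by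
    simp [he]
  have s3 : ∀ a b : 𝔫, ∑ i, (-killingForm ℝ 𝔫 (e i) b) * γ₁ a (e i) = γ₁ a b := by
    intro a b
    have h1 : ∀ i : Fin n, (-killingForm ℝ 𝔫 (e i) b) * γ₁ a (e i)
        = (-killingForm ℝ 𝔫 b (e i)) * (-killingForm ℝ 𝔫 (sh a) (e i)) := by
      intro i; rw [hsh a (e i), ksymm (e i) b]
    rw [Finset.sum_congr rfl fun i _ => h1 i, parseval b (sh a), ksymm b (sh a), hsh a b]
  have s4 : ∀ a b : 𝔫, ∑ i, γ₁ a (e i) * (-killingForm ℝ 𝔫 b (e i)) = γ₁ a b := by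
    intro a b
    rw [← s3 a b]
    exact Finset.sum_congr rfl fun i _ => by rw [ksymm b (e i)]; ring
  have s5 : ∀ a b : 𝔫, ∑ i, γ₁ (e i) b * (-killingForm ℝ 𝔫 a (e i)) = γ₁ a b := by
    intro a b
    conv_rhs => rw [← hexp a]
    rw [map_sum, LinearMap.sum_apply]
    exact Finset.sum_congr rfl fun i _ => by
      rw [map_smul, LinearMap.smul_apply, smul_eq_mul]; ring
  have hEq : ∀ a b : 𝔫, (1/4) * (-killingForm ℝ 𝔫 a b) + (n:ℝ) * γ₁ a b - γ₁ a b
      + (-killingForm ℝ 𝔫 a b) * T - γ₁ b a = 0 := by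
    intro a b
    have h0 := htrace a b
    rw [Finset.sum_congr rfl (fun i _ => hsummand a b i)] at h0
    simp only [Finset.sum_add_distrib, Finset.sum_sub_distrib, ← Finset.mul_sum,
      ← Finset.sum_mul] at h0
    rw [casimir a b, s2, s3 a b, s4 a b, s5 a b, s5 b a, ← hT] at h0
    linarith
  have hnR : (3:ℝ) ≤ (n:ℝ) := by exact_mod_cast hn
  have hsymγ : ∀ a b : 𝔫, γ₁ a b = γ₁ b a := by
    intro a b
    have h1 := hEq a b
    have h2 := hEq b a
    have hk : killingForm ℝ 𝔫 a b = killingForm ℝ 𝔫 b a := ksymm a b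
    have h3 : (n:ℝ) * (γ₁ a b - γ₁ b a) = 0 := by
      linear_combination h1 - h2 + (1/4 + T) * hk
    rcases mul_eq_zero.mp h3 with h | h
    · linarith
    · linarith
  have hTval : ((n:ℝ) - 2) * T + (n:ℝ) * (1/4 + T) = 0 := by
    have hd : ∑ i, (((n:ℝ) - 2) * γ₁ (e i) (e i) + (1/4 + T)) = 0 := by
      rw [← Finset.sum_eq_zero (fun i (_ : i ∈ univ) => hEq (e i) (e i))]
      refine Finset.sum_congr rfl fun i _ => ?_
      have hii : -killingForm ℝ 𝔫 (e i) (e i) = 1 := by rw [he i i]; simp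
      rw [hii]; ring
    rw [Finset.sum_add_distrib, ← Finset.mul_sum, Finset.sum_const, card_univ,
      Fintype.card_fin, nsmul_eq_mul] at hd
    linarith
  -- final formula for γ₁
  have step2 : ∀ a x : 𝔫, γ₁ a x
      = -(1 / (8 * ((n : ℝ) - 1))) * (-killingForm ℝ 𝔫 a x) := by
    intro a x
    have h1 := hEq a x
    have h2 := hsymγ a x
    have hn2 : ((n:ℝ) - 2) ≠ 0 := by linarith
    have hn1 : (8 * ((n:ℝ) - 1)) ≠ 0 := by linarith
    have h3 : ((n:ℝ) - 2) * γ₁ a x + (1/4 + T) * (-killingForm ℝ 𝔫 a x) = 0 := by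
      linear_combination h1 - h2
    have hTv : T * (8*((n:ℝ)-1)) = -(n:ℝ) := by
      linear_combination 4 * hTval
    have hu : (8*((n:ℝ)-1)) * (1/(8*((n:ℝ)-1))) = 1 := by
      rw [mul_one_div, div_self hn1]
    refine mul_left_cancel₀ (show ((n:ℝ)-2)*(8*((n:ℝ)-1)) ≠ 0 from
      mul_ne_zero hn2 hn1) ?_
    linear_combination (8*((n:ℝ)-1)) * h3
      + (((n:ℝ)-2) * (-killingForm ℝ 𝔫 a x)) * hu
      - (-killingForm ℝ 𝔫 a x) * hTv
  exact ⟨step1, step2⟩
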